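/- Let Z be uniform on [k]^{n+s}, V = Z[0,n), W = Z[s,n+s). Suppose V is partitioned into consecutive blocks (V_i) and W into consecutive blocks (W_i) such that for each i the sets of positions of Z occupied by V_i and W_i are disjoint. Let X = Σ_i LCS(V_i, W_i). Then E[X] ≤ E[L_n], where L_n is the LCS length of two independent uniform words of length n over [k]. -/

import Mathlib

/-- The length of a longest common subsequence of two words. -/
noncomputable def lcs {α : Type*} (V W : List α) : ℕ :=
  sSup {L | ∃ C : List α, C.Sublist V ∧ C.Sublist W ∧ C.length = L}

open List

lemma lcs_bdd {α : Type*} (V W : List α) :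
    BddAbove {L | ∃ C : List α, C.Sublist V ∧ C.Sublist W ∧ C.length = L} := by
  refine ⟨V.length, ?_⟩
  rintro L ⟨C, h1, -, rfl⟩
  exact h1.length_le

lemma lcs_exists {α : Type*} (V W : List α) :
    ∃ C : List α, C.Sublist V ∧ C.Sublist W ∧ C.length = lcs V W := by
  have hne : {L | ∃ C : List α, C.Sublist V ∧ C.Sublist W ∧ C.length = L}.Nonempty :=
    ⟨0, [], nil_sublist _, nil_sublist _, rfl⟩
  exact Nat.sSup_mem hne (lcs_bdd V W)

lemma length_le_lcs {α : Type*} {C V W : List α} (h1 : C.Sublist V) (h2 : C.Sublist W) :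
    C.length ≤ lcs V W :=
  le_csSup (lcs_bdd V W) ⟨C, h1, h2, rfl⟩

lemma lcs_le_lcs {α : Type*} {V W V' W' : List α} (hV : V.Sublist V') (hW : W.Sublist W') :
    lcs V W ≤ lcs V' W' := by
  obtain ⟨C, h1, h2, h3⟩ := lcs_exists V W
  exact h3 ▸ length_le_lcs (h1.trans hV) (h2.trans hW)

lemma lcs_append_le {α : Type*} (V₁ V₂ W₁ W₂ : List α) :
    lcs V₁ W₁ + lcs V₂ W₂ ≤ lcs (V₁ ++ V₂) (W₁ ++ W₂) := by
  obtain ⟨C₁, hC₁V, hC₁W, hC₁⟩ := lcs_exists V₁ W₁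
  obtain ⟨C₂, hC₂V, hC₂W, hC₂⟩ := lcs_exists V₂ W₂
  have := length_le_lcs (hC₁V.append hC₂V) (hC₁W.append hC₂W)
  simpa [hC₁, hC₂] using this

lemma sum_lcs_blocks_le {α : Type*} (V W : List α) (a c : ℕ → ℕ)
    (ha : Monotone a) (hc : Monotone c) (r : ℕ) :
    ∑ i ∈ Finset.range r,
      lcs ((V.drop (a i)).take (a (i+1) - a i)) ((W.drop (c i)).take (c (i+1) - c i))
      ≤ lcs (V.take (a r)) (W.take (c r)) := by
  induction r with
  | zero => simp
  | succ r ih =>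
    rw [Finset.sum_range_succ]
    have h1 : V.take (a (r+1)) = V.take (a r) ++ ((V.drop (a r)).take (a (r+1) - a r)) := by
      rw [← List.take_add]
      congr 1
      have := ha (Nat.le_add_right r 1)
      omega
    have h2 : W.take (c (r+1)) = W.take (c r) ++ ((W.drop (c r)).take (c (r+1) - c r)) := by
      rw [← List.take_add]
      congr 1
      have := hc (Nat.le_add_right r 1)
      omega
    calc _ ≤ lcs (V.take (a r)) (W.take (c r))
          + lcs ((V.drop (a r)).take (a (r+1) - a r)) ((W.drop (c r)).take (c (r+1) - c r)) :=
        add_le_add_left ih _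
      _ ≤ _ := by rw [h1, h2]; exact lcs_append_le _ _ _ _

lemma sum_lcs_fin_blocks_le {α : Type*} (r : ℕ) (V W : List α) (a c : Fin (r+1) → ℕ)
    (ha : Monotone a) (hc : Monotone c)
    (han : V.length ≤ a (Fin.last r)) (hcn : W.length ≤ c (Fin.last r)) :
    ∑ i : Fin r, lcs ((V.drop (a i.castSucc)).take (a i.succ - a i.castSucc))
        ((W.drop (c i.castSucc)).take (c i.succ - c i.castSucc)) ≤ lcs V W := by
  set a' : ℕ → ℕ := fun i => a ⟨min i r, by omega⟩ with ha'def
  set c' : ℕ → ℕ := fun i => c ⟨min i r, by omega⟩ with hc'def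
  have ha' : Monotone a' := fun i j hij => ha (by simp [Fin.le_def]; omega)
  have hc' : Monotone c' := fun i j hij => hc (by simp [Fin.le_def]; omega)
  have haeq : ∀ i : Fin r, a i.castSucc = a' ↑i ∧ a i.succ = a' (↑i + 1) := by
    intro i
    constructor
    · exact congrArg a (Fin.ext (by simp [Fin.castSucc, min_eq_left i.isLt.le]))
    · exact congrArg a (Fin.ext (by simp [Fin.succ]))
  have hceq : ∀ i : Fin r, c i.castSucc = c' ↑i ∧ c i.succ = c' (↑i + 1) := by
    intro i
    constructor
    · exact congrArg c (Fin.ext (by simp [Fin.castSucc, min_eq_left i.isLt.le]))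
    · exact congrArg c (Fin.ext (by simp [Fin.succ]))
  have hlast : (⟨min r r, by omega⟩ : Fin (r+1)) = Fin.last r := Fin.ext (by simp)
  calc ∑ i : Fin r, lcs ((V.drop (a i.castSucc)).take (a i.succ - a i.castSucc))
        ((W.drop (c i.castSucc)).take (c i.succ - c i.castSucc))
      = ∑ i ∈ Finset.range r, lcs ((V.drop (a' i)).take (a' (i+1) - a' i))
          ((W.drop (c' i)).take (c' (i+1) - c' i)) := by
        rw [← Fin.sum_univ_eq_sum_range]
        refine Finset.sum_congr rfl fun i _ => ?_
        rw [(haeq i).1, (haeq i).2, (hceq i).1, (hceq i).2]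
    _ ≤ lcs (V.take (a' r)) (W.take (c' r)) := sum_lcs_blocks_le V W a' c' ha' hc' r
    _ ≤ lcs V W := by
        rw [ha'def, hc'def]
        simp only [hlast]
        rw [List.take_of_length_le han, List.take_of_length_le hcn]

lemma ofFn_drop_take {N : ℕ} {α : Type*} (f : Fin N → α) (d t : ℕ) (h : d + t ≤ N) :
    ((List.ofFn f).drop d).take t = List.ofFn (fun j : Fin t => f ⟨d + j.1, by omega⟩) := by
  apply List.ext_getElem
  · simp; omega
  · intro i h1 h2
    simp [List.getElem_take, List.getElem_drop]

lemma ofFn_take_drop_take {N : ℕ} {α : Type*} (f : Fin N → α) (nn d t : ℕ)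
    (hnn : nn ≤ N) (h : d + t ≤ nn) :
    (((List.ofFn f).take nn).drop d).take t
      = List.ofFn (fun j : Fin t => f ⟨d + j.1, by omega⟩) := by
  apply List.ext_getElem
  · simp; omega
  · intro i h1 h2
    simp [List.getElem_take, List.getElem_drop]

open Classical in
noncomputable def splitEquiv {α β γ : Type*} (g : α → β) (hg : Function.Injective g) :
    (β → γ) ≃ ((α → γ) × (((Set.range g)ᶜ : Set β) → γ)) where
  toFun Z := ⟨fun a => Z (g a), fun x => Z x.1⟩
  invFun p b := if h : ∃ a, g a = b then p.1 h.choose else p.2 ⟨b, fun hb => h hb⟩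
  left_inv Z := by
    funext b
    by_cases h : ∃ a, g a = b
    · simp only [dif_pos h]
      exact congrArg Z h.choose_spec
    · simp only [dif_neg h]
  right_inv p := by
    obtain ⟨w, u⟩ := p
    refine Prod.ext ?_ ?_
    · funext x
      have h : ∃ a', g a' = g x := ⟨x, rfl⟩
      simp only [dif_pos h]
      exact congrArg w (hg h.choose_spec)
    · funext x
      have h : ¬ ∃ a', g a' = x.1 := fun ⟨a', ha'⟩ => x.2 ⟨a', ha'⟩
      simp only [dif_neg h]

lemma sum_comp_eq {α β : Type*} [Fintype α] [Fintype β] [DecidableEq α] [DecidableEq β] (k : ℕ) (g : α → β)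
    (hg : Function.Injective g) (F : (α → Fin k) → ℝ) :
    ∑ Z : β → Fin k, F (fun a => Z (g a))
      = (k : ℝ) ^ (Fintype.card β - Fintype.card α) * ∑ w : α → Fin k, F w := by
  classical
  have hbij := (splitEquiv g hg (γ := Fin k)).bijective
  rw [Fintype.sum_bijective _ hbij (fun Z => F (fun a => Z (g a))) (fun p => F p.1)
    (fun Z => rfl)]
  rw [Fintype.sum_prod_type]
  have hcard : Fintype.card (((Set.range g)ᶜ : Set β) → Fin k)
      = k ^ (Fintype.card β - Fintype.card α) := by
    rw [Fintype.card_fun, Fintype.card_fin]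
    congr 1
    rw [Fintype.card_compl_set, Set.card_range_of_injective hg]
  simp only [Finset.sum_const, nsmul_eq_mul]
  rw [Finset.card_univ, hcard, ← Finset.mul_sum]
  push_cast
  ring

lemma block_count (k n s A A' C C' : ℕ) (hA : A ≤ A') (hA' : A' ≤ n) (hC : C ≤ C')
    (hC' : C' ≤ n) (hd : A' ≤ s + C ∨ s + C' ≤ A) :
    ∑ Z : Fin (n + s) → Fin k,
      (lcs ((((List.ofFn Z).take n).drop A).take (A' - A))
           ((((List.ofFn Z).drop s).drop C).take (C' - C)) : ℝ)
      = (k : ℝ) ^ ((n + s) - ((A' - A) + (C' - C))) *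
          ∑ p : Fin (A' - A) → Fin k, ∑ q : Fin (C' - C) → Fin k,
            (lcs (List.ofFn p) (List.ofFn q) : ℝ) := by
  have hV : ∀ Z : Fin (n + s) → Fin k, (((List.ofFn Z).take n).drop A).take (A' - A)
      = List.ofFn (fun j : Fin (A' - A) => Z ⟨A + j.1, by have := j.2; omega⟩) :=
    fun Z => ofFn_take_drop_take Z n A (A' - A) (by omega) (by omega)
  have hW : ∀ Z : Fin (n + s) → Fin k, (((List.ofFn Z).drop s).drop C).take (C' - C)
      = List.ofFn (fun j : Fin (C' - C) => Z ⟨s + C + j.1, by have := j.2; omega⟩) := by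
    intro Z
    rw [List.drop_drop]
    exact ofFn_drop_take Z (s + C) (C' - C) (by omega)
  have hg : Function.Injective (Sum.elim
      (fun j : Fin (A' - A) => (⟨A + j.1, by have := j.2; omega⟩ : Fin (n + s)))
      (fun j : Fin (C' - C) => (⟨s + C + j.1, by have := j.2; omega⟩ : Fin (n + s)))) := by
    rintro (x | x) (y | y) hxy <;>
      simp only [Sum.elim_inl, Sum.elim_inr, Fin.mk.injEq] at hxy
    · exact congrArg Sum.inl (Fin.ext (by omega))
    · exact absurd hxy (by have := x.2; have := y.2; omega)
    · exact absurd hxy (by have := x.2; have := y.2; omega)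
    · exact congrArg Sum.inr (Fin.ext (by omega))
  calc ∑ Z : Fin (n + s) → Fin k,
        (lcs ((((List.ofFn Z).take n).drop A).take (A' - A))
             ((((List.ofFn Z).drop s).drop C).take (C' - C)) : ℝ)
      = ∑ Z : Fin (n + s) → Fin k,
          (lcs (List.ofFn (fun j : Fin (A' - A) => Z ⟨A + j.1, by have := j.2; omega⟩))
               (List.ofFn (fun j : Fin (C' - C) => Z ⟨s + C + j.1, by have := j.2; omega⟩)) : ℝ) := by
        refine Finset.sum_congr rfl fun Z _ => ?_
        rw [hV Z, hW Z]
    _ = (k : ℝ) ^ (Fintype.card (Fin (n + s)) - Fintype.card (Fin (A' - A) ⊕ Fin (C' - C))) *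
          ∑ w : (Fin (A' - A) ⊕ Fin (C' - C)) → Fin k,
            (lcs (List.ofFn (fun j => w (Sum.inl j))) (List.ofFn (fun j => w (Sum.inr j))) : ℝ) :=
        sum_comp_eq k _ hg
          (fun w => (lcs (List.ofFn (fun j => w (Sum.inl j)))
            (List.ofFn (fun j => w (Sum.inr j))) : ℝ))
    _ = (k : ℝ) ^ ((n + s) - ((A' - A) + (C' - C))) *
          ∑ pq : (Fin (A' - A) → Fin k) × (Fin (C' - C) → Fin k),
            (lcs (List.ofFn pq.1) (List.ofFn pq.2) : ℝ) := by
        congr 1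
        · simp
        · exact Equiv.sum_comp (Equiv.sumArrowEquivProdArrow (Fin (A' - A)) (Fin (C' - C)) (Fin k))
            (fun pq => (lcs (List.ofFn pq.1) (List.ofFn pq.2) : ℝ))
    _ = _ := by rw [Fintype.sum_prod_type]

lemma block_count_one (k n A A' : ℕ) (hA : A ≤ A') (hA' : A' ≤ n) (F : List (Fin k) → ℝ) :
    ∑ P : Fin n → Fin k, F (((List.ofFn P).drop A).take (A' - A))
      = (k : ℝ) ^ (n - (A' - A)) * ∑ p : Fin (A' - A) → Fin k, F (List.ofFn p) := by
  have hV : ∀ P : Fin n → Fin k, ((List.ofFn P).drop A).take (A' - A)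
      = List.ofFn (fun j : Fin (A' - A) => P ⟨A + j.1, by have := j.2; omega⟩) :=
    fun P => ofFn_drop_take P A (A' - A) (by omega)
  have hg : Function.Injective
      (fun j : Fin (A' - A) => (⟨A + j.1, by have := j.2; omega⟩ : Fin n)) := by
    intro x y hxy
    simp only [Fin.mk.injEq] at hxy
    exact Fin.ext (by omega)
  calc ∑ P : Fin n → Fin k, F (((List.ofFn P).drop A).take (A' - A))
      = ∑ P : Fin n → Fin k,
          F (List.ofFn (fun j : Fin (A' - A) => P ⟨A + j.1, by have := j.2; omega⟩)) := by
        refine Finset.sum_congr rfl fun P _ => ?_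
        rw [hV P]
    _ = (k : ℝ) ^ (Fintype.card (Fin n) - Fintype.card (Fin (A' - A))) *
          ∑ p : Fin (A' - A) → Fin k, F (List.ofFn p) :=
        sum_comp_eq k _ hg (fun p => F (List.ofFn p))
    _ = _ := by simp

/-- `aseq k n = E[L_n]`, the expected LCS length of two independent uniform words. -/
noncomputable def aseq (k n : ℕ) : ℝ :=
  (∑ p : (Fin n → Fin k) × (Fin n → Fin k), (lcs (List.ofFn p.1) (List.ofFn p.2) : ℝ)) /
    (Fintype.card ((Fin n → Fin k) × (Fin n → Fin k)) : ℝ)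

/-- Let `Z` be uniform on `[k]^{n+s}`, `V = Z[0,n)`, `W = Z[s,n+s)`.  Suppose `V` and `W`
are partitioned into `r` consecutive blocks by boundary sequences `a` and `c`
(so `V_i = V[a_i, a_{i+1})` and `W_i = W[c_i, c_{i+1})`) such that for each `i` the sets
of positions of `Z` occupied by `V_i` and by `W_i` are disjoint.  Then with
`X = Σ_i LCS(V_i, W_i)` we have `E[X] ≤ E[L_n]`. -/
theorem expected_block_lcs_le (k n s r : ℕ) (hk : 1 ≤ k) (hs : s ≤ n)
    (a c : Fin (r + 1) → ℕ) (ha : Monotone a) (hc : Monotone c)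
    (ha0 : a 0 = 0) (han : a (Fin.last r) = n) (hc0 : c 0 = 0) (hcn : c (Fin.last r) = n)
    (hdisj : ∀ i : Fin r, a i.succ ≤ s + c i.castSucc ∨ s + c i.succ ≤ a i.castSucc) :
    (∑ Z : Fin (n + s) → Fin k, (∑ i : Fin r,
        (lcs
          ((((List.ofFn Z).take n).drop (a i.castSucc)).take (a i.succ - a i.castSucc))
          ((((List.ofFn Z).drop s).drop (c i.castSucc)).take (c i.succ - c i.castSucc))
          : ℝ))) / (Fintype.card (Fin (n + s) → Fin k) : ℝ) ≤ aseq k n := by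
  classical
  have hax : ∀ i : Fin r, a i.castSucc ≤ a i.succ := fun i => ha (Fin.castSucc_lt_succ : i.castSucc < i.succ).le
  have han' : ∀ i : Fin r, a i.succ ≤ n := fun i => han ▸ ha (Fin.le_last _)
  have hcx : ∀ i : Fin r, c i.castSucc ≤ c i.succ := fun i => hc (Fin.castSucc_lt_succ : i.castSucc < i.succ).le
  have hcn' : ∀ i : Fin r, c i.succ ≤ n := fun i => hcn ▸ hc (Fin.le_last _)
  have hk0 : (0 : ℝ) < (k : ℝ) := by exact_mod_cast hk
  -- Step 1: compute the LHS numerator blockwise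
  have hA : (∑ Z : Fin (n + s) → Fin k, (∑ i : Fin r,
        (lcs
          ((((List.ofFn Z).take n).drop (a i.castSucc)).take (a i.succ - a i.castSucc))
          ((((List.ofFn Z).drop s).drop (c i.castSucc)).take (c i.succ - c i.castSucc))
          : ℝ)))
      = ∑ i : Fin r, (k : ℝ) ^ ((n + s) - ((a i.succ - a i.castSucc) + (c i.succ - c i.castSucc))) *
          ∑ p : Fin (a i.succ - a i.castSucc) → Fin k, ∑ q : Fin (c i.succ - c i.castSucc) → Fin k,
            (lcs (List.ofFn p) (List.ofFn q) : ℝ) := by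
    rw [Finset.sum_comm]
    refine Finset.sum_congr rfl fun i _ => ?_
    exact block_count k n s (a i.castSucc) (a i.succ) (c i.castSucc) (c i.succ)
      (hax i) (han' i) (hcx i) (hcn' i) (hdisj i)
  -- Step 2: per-block computation on the independent side
  have per_i : ∀ i : Fin r,
      ∑ P : Fin n → Fin k, ∑ Q : Fin n → Fin k,
        (lcs (((List.ofFn P).drop (a i.castSucc)).take (a i.succ - a i.castSucc))
             (((List.ofFn Q).drop (c i.castSucc)).take (c i.succ - c i.castSucc)) : ℝ)
      = (k : ℝ) ^ (2 * n - ((a i.succ - a i.castSucc) + (c i.succ - c i.castSucc))) *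
          ∑ p : Fin (a i.succ - a i.castSucc) → Fin k, ∑ q : Fin (c i.succ - c i.castSucc) → Fin k,
            (lcs (List.ofFn p) (List.ofFn q) : ℝ) := by
    intro i
    have ha1 := hax i; have ha2 := han' i; have hc1 := hcx i; have hc2 := hcn' i
    calc ∑ P : Fin n → Fin k, ∑ Q : Fin n → Fin k,
          (lcs (((List.ofFn P).drop (a i.castSucc)).take (a i.succ - a i.castSucc))
               (((List.ofFn Q).drop (c i.castSucc)).take (c i.succ - c i.castSucc)) : ℝ)
        = ∑ P : Fin n → Fin k, (k : ℝ) ^ (n - (c i.succ - c i.castSucc)) *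
            ∑ q : Fin (c i.succ - c i.castSucc) → Fin k,
              (lcs (((List.ofFn P).drop (a i.castSucc)).take (a i.succ - a i.castSucc))
                (List.ofFn q) : ℝ) := by
          refine Finset.sum_congr rfl fun P _ => ?_
          exact block_count_one k n (c i.castSucc) (c i.succ) hc1 hc2
            (fun W' => (lcs (((List.ofFn P).drop (a i.castSucc)).take (a i.succ - a i.castSucc)) W' : ℝ))
      _ = (k : ℝ) ^ (n - (c i.succ - c i.castSucc)) *
            ∑ P : Fin n → Fin k, ∑ q : Fin (c i.succ - c i.castSucc) → Fin k,
              (lcs (((List.ofFn P).drop (a i.castSucc)).take (a i.succ - a i.castSucc))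
                (List.ofFn q) : ℝ) := by rw [← Finset.mul_sum]
      _ = (k : ℝ) ^ (n - (c i.succ - c i.castSucc)) *
            ∑ q : Fin (c i.succ - c i.castSucc) → Fin k, ∑ P : Fin n → Fin k,
              (lcs (((List.ofFn P).drop (a i.castSucc)).take (a i.succ - a i.castSucc))
                (List.ofFn q) : ℝ) := by rw [Finset.sum_comm]
      _ = (k : ℝ) ^ (n - (c i.succ - c i.castSucc)) *
            ∑ q : Fin (c i.succ - c i.castSucc) → Fin k, (k : ℝ) ^ (n - (a i.succ - a i.castSucc)) *
              ∑ p : Fin (a i.succ - a i.castSucc) → Fin k,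
                (lcs (List.ofFn p) (List.ofFn q) : ℝ) := by
          congr 1
          refine Finset.sum_congr rfl fun q _ => ?_
          exact block_count_one k n (a i.castSucc) (a i.succ) ha1 ha2
            (fun V' => (lcs V' (List.ofFn q) : ℝ))
      _ = (k : ℝ) ^ (n - (c i.succ - c i.castSucc)) * ((k : ℝ) ^ (n - (a i.succ - a i.castSucc)) *
            ∑ q : Fin (c i.succ - c i.castSucc) → Fin k,
              ∑ p : Fin (a i.succ - a i.castSucc) → Fin k,
                (lcs (List.ofFn p) (List.ofFn q) : ℝ)) := by rw [← Finset.mul_sum]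
      _ = _ := by
          rw [Finset.sum_comm, ← mul_assoc, ← pow_add]
          congr 2
          omega
  -- Step 3: superadditivity bound on the independent side
  have hB : (∑ i : Fin r, (k : ℝ) ^ (2 * n - ((a i.succ - a i.castSucc) + (c i.succ - c i.castSucc))) *
        ∑ p : Fin (a i.succ - a i.castSucc) → Fin k, ∑ q : Fin (c i.succ - c i.castSucc) → Fin k,
          (lcs (List.ofFn p) (List.ofFn q) : ℝ))
      ≤ ∑ pq : (Fin n → Fin k) × (Fin n → Fin k), (lcs (List.ofFn pq.1) (List.ofFn pq.2) : ℝ) := by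
    rw [Fintype.sum_prod_type]
    calc ∑ i : Fin r, (k : ℝ) ^ (2 * n - ((a i.succ - a i.castSucc) + (c i.succ - c i.castSucc))) *
          ∑ p : Fin (a i.succ - a i.castSucc) → Fin k, ∑ q : Fin (c i.succ - c i.castSucc) → Fin k,
            (lcs (List.ofFn p) (List.ofFn q) : ℝ)
        = ∑ i : Fin r, ∑ P : Fin n → Fin k, ∑ Q : Fin n → Fin k,
            (lcs (((List.ofFn P).drop (a i.castSucc)).take (a i.succ - a i.castSucc))
                 (((List.ofFn Q).drop (c i.castSucc)).take (c i.succ - c i.castSucc)) : ℝ) :=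
          (Finset.sum_congr rfl fun i _ => (per_i i).symm)
      _ = ∑ P : Fin n → Fin k, ∑ i : Fin r, ∑ Q : Fin n → Fin k,
            (lcs (((List.ofFn P).drop (a i.castSucc)).take (a i.succ - a i.castSucc))
                 (((List.ofFn Q).drop (c i.castSucc)).take (c i.succ - c i.castSucc)) : ℝ) :=
          Finset.sum_comm
      _ = ∑ P : Fin n → Fin k, ∑ Q : Fin n → Fin k, ∑ i : Fin r,
            (lcs (((List.ofFn P).drop (a i.castSucc)).take (a i.succ - a i.castSucc))
                 (((List.ofFn Q).drop (c i.castSucc)).take (c i.succ - c i.castSucc)) : ℝ) :=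
          Finset.sum_congr rfl fun P _ => Finset.sum_comm
      _ ≤ ∑ P : Fin n → Fin k, ∑ Q : Fin n → Fin k, (lcs (List.ofFn P) (List.ofFn Q) : ℝ) := by
          refine Finset.sum_le_sum fun P _ => Finset.sum_le_sum fun Q _ => ?_
          have h := sum_lcs_fin_blocks_le r (List.ofFn P) (List.ofFn Q) a c ha hc
            (by simp [han]) (by simp [hcn])
          calc ∑ i : Fin r,
              (lcs (((List.ofFn P).drop (a i.castSucc)).take (a i.succ - a i.castSucc))
                   (((List.ofFn Q).drop (c i.castSucc)).take (c i.succ - c i.castSucc)) : ℝ)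
              = ((∑ i : Fin r,
                  lcs (((List.ofFn P).drop (a i.castSucc)).take (a i.succ - a i.castSucc))
                      (((List.ofFn Q).drop (c i.castSucc)).take (c i.succ - c i.castSucc)) : ℕ) : ℝ) := by
                push_cast; rfl
            _ ≤ _ := by exact_mod_cast h
  -- Step 4: put it together
  rw [hA, aseq]
  have hcard1 : (Fintype.card (Fin (n + s) → Fin k) : ℝ) = (k : ℝ) ^ (n + s) := by
    simp [Fintype.card_fun]
  have hcard2 : (Fintype.card ((Fin n → Fin k) × (Fin n → Fin k)) : ℝ) = (k : ℝ) ^ (2 * n) := by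
    simp only [Fintype.card_prod, Fintype.card_fun, Fintype.card_fin]
    push_cast
    rw [← pow_add, two_mul]
  rw [hcard1, hcard2]
  calc (∑ i : Fin r, (k : ℝ) ^ ((n + s) - ((a i.succ - a i.castSucc) + (c i.succ - c i.castSucc))) *
        ∑ p : Fin (a i.succ - a i.castSucc) → Fin k, ∑ q : Fin (c i.succ - c i.castSucc) → Fin k,
          (lcs (List.ofFn p) (List.ofFn q) : ℝ)) / (k : ℝ) ^ (n + s)
      = (∑ i : Fin r, (k : ℝ) ^ (2 * n - ((a i.succ - a i.castSucc) + (c i.succ - c i.castSucc))) *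
          ∑ p : Fin (a i.succ - a i.castSucc) → Fin k, ∑ q : Fin (c i.succ - c i.castSucc) → Fin k,
            (lcs (List.ofFn p) (List.ofFn q) : ℝ)) / (k : ℝ) ^ (2 * n) := by
        rw [Finset.sum_div, Finset.sum_div]
        refine Finset.sum_congr rfl fun i _ => ?_
        have ha1 := hax i; have ha2 := han' i; have hc1 := hcx i; have hc2 := hcn' i
        have he1 : (a i.succ - a i.castSucc) + (c i.succ - c i.castSucc) ≤ n + s := by
          rcases hdisj i with h | h <;> omega
        rw [div_eq_div_iff (by positivity) (by positivity)]
        rw [mul_comm ((k : ℝ) ^ ((n + s) - ((a i.succ - a i.castSucc) + (c i.succ - c i.castSucc)))) _,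
          mul_assoc, ← pow_add,
          mul_comm ((k : ℝ) ^ (2 * n - ((a i.succ - a i.castSucc) + (c i.succ - c i.castSucc)))) _,
          mul_assoc, ← pow_add]
        congr 2
        omega
    _ ≤ _ := by
        exact div_le_div_of_nonneg_right hB (pow_pos hk0 _).le
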